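/- Let $R = K[T,U,V,W]/(T^8 - UV,\ T^4(V-W) - VW,\ U(V-W) - T^4 W)$ over a field $K$. Then $R$ is isomorphic to the subring $K[t, t^4x, t^4x^{-1}, t^4(x+1)^{-1}]$ of $K(t,x)$, via $t \mapsto t$, $u \mapsto t^4 x$, $v \mapsto t^4 x^{-1}$, $w \mapsto t^4 (x+1)^{-1}$. -/

import Mathlib

open MvPolynomial

namespace Pres15
open Polynomial

noncomputable section

variable {K : Type} [Field K] {S : Type} [CommRing S]

/-- evaluation of a 2-variable polynomial (iterated polynomial ring) -/
def ev2 (f : K →+* S) (a b : S) : Polynomial (Polynomial K) →+* S :=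
  Polynomial.eval₂RingHom (Polynomial.eval₂RingHom f a) b

@[simp] lemma ev2_CC (f : K →+* S) (a b : S) (c : Polynomial K) :
    ev2 f a b (Polynomial.C c) = Polynomial.eval₂ f a c := by
  simp [ev2]

@[simp] lemma ev2_X (f : K →+* S) (a b : S) :
    ev2 f a b Polynomial.X = b := by simp [ev2]

lemma ev2_mul_X (f : K →+* S) (a b : S) (s : Polynomial (Polynomial K)) :
    ev2 f a b (s * Polynomial.X) = ev2 f a b s * b := by
  simp

lemma ev2_mul_CXp (f : K →+* S) (a b : S) (s : Polynomial (Polynomial K)) (k : ℕ) :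
    ev2 f a b (s * Polynomial.C (Polynomial.X ^ k)) = ev2 f a b s * a ^ k := by
  have h : (Polynomial.C (Polynomial.X ^ k) : Polynomial (Polynomial K))
      = (Polynomial.C Polynomial.X) ^ k := by rw [map_pow]
  rw [h, map_mul, map_pow, ev2_CC, Polynomial.eval₂_X]

lemma hom_ev2 {S₂ : Type} [CommRing S₂] (g : S →+* S₂) (f : K →+* S) (a b : S)
    (s : Polynomial (Polynomial K)) :
    g (ev2 f a b s) = ev2 (g.comp f) (g a) (g b) s := by
  simp only [ev2, coe_eval₂RingHom, Polynomial.hom_eval₂]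
  congr 1
  ext c
  · simp
  · simp

/-- expansion of a ring hom applied to a polynomial as a sum over the support -/
lemma ev2_as_sum (f : K →+* S) (a b : S) (q : Polynomial (Polynomial K)) :
    ev2 f a b q = ∑ i ∈ q.support, Polynomial.eval₂ f a (q.coeff i) * b ^ i := by
  conv_lhs => rw [q.as_sum_support, map_sum]
  refine Finset.sum_congr rfl fun i _ => ?_
  rw [← Polynomial.C_mul_X_pow_eq_monomial, map_mul, map_pow, ev2_CC, ev2_X]

/-- the canonical map `K[X][X] → K[x0,x1]`, inner `X ↦ X 0`, outer `X ↦ X 1` -/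
def toA : Polynomial (Polynomial K) →+* MvPolynomial (Fin 2) K :=
  ev2 (MvPolynomial.C) (MvPolynomial.X 0) (MvPolynomial.X 1)

def back : MvPolynomial (Fin 2) K →ₐ[K] Polynomial (Polynomial K) :=
  MvPolynomial.aeval ![Polynomial.C Polynomial.X, Polynomial.X]

lemma back_toA (s : Polynomial (Polynomial K)) : back (toA s) = s := by
  have h : (back.toRingHom.comp (toA (K := K))) = RingHom.id _ := by
    apply Polynomial.ringHom_ext'
    · apply Polynomial.ringHom_ext'
      · ext k
        simp [toA, back, ev2]
      · simp [toA, back, ev2, Polynomial.eval₂_C]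
    · simp [toA, back, ev2]
  calc back (toA s) = (back.toRingHom.comp (toA (K := K))) s := rfl
  _ = s := by rw [h]; rfl

lemma toA_injective : Function.Injective (toA (K := K)) := by
  intro s₁ s₂ h
  have := congrArg back h
  simpa [back_toA] using this

lemma iota_toA (s : Polynomial (Polynomial K)) :
    algebraMap (MvPolynomial (Fin 2) K) (FractionRing (MvPolynomial (Fin 2) K)) (toA s)
      = ev2 (algebraMap K (FractionRing (MvPolynomial (Fin 2) K)))
          (algebraMap (MvPolynomial (Fin 2) K) (FractionRing (MvPolynomial (Fin 2) K)) (MvPolynomial.X 0)) (algebraMap (MvPolynomial (Fin 2) K) (FractionRing (MvPolynomial (Fin 2) K)) (MvPolynomial.X 1)) s := by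
  rw [toA, hom_ev2]
  have h : (algebraMap (MvPolynomial (Fin 2) K)
        (FractionRing (MvPolynomial (Fin 2) K))).comp (MvPolynomial.C)
      = algebraMap K (FractionRing (MvPolynomial (Fin 2) K)) := by
    rw [← MvPolynomial.algebraMap_eq, ← IsScalarTower.algebraMap_eq]
  rw [h]

lemma Ev_injective :
    Function.Injective (ev2 (algebraMap K (FractionRing (MvPolynomial (Fin 2) K)))
      (algebraMap (MvPolynomial (Fin 2) K) (FractionRing (MvPolynomial (Fin 2) K)) (MvPolynomial.X 0)) (algebraMap (MvPolynomial (Fin 2) K) (FractionRing (MvPolynomial (Fin 2) K)) (MvPolynomial.X 1))) := by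
  intro s₁ s₂ h
  rw [← iota_toA, ← iota_toA] at h
  exact toA_injective (IsFractionRing.injective (MvPolynomial (Fin 2) K) _ h)

/-- twisted polynomial: `Σ cᵢ X^{4i} e^{m-i}` -/
def tw (e : Polynomial (Polynomial K)) (m : ℕ) (q : Polynomial (Polynomial K)) :
    Polynomial (Polynomial K) :=
  ∑ i ∈ q.support, Polynomial.C (q.coeff i * Polynomial.X ^ (4 * i)) * e ^ (m - i)

def sub4 (p : Polynomial (Polynomial K)) : Polynomial (Polynomial K) :=
  ∑ i ∈ p.support, Polynomial.C (p.coeff i * Polynomial.X ^ (4 * i)) * Polynomial.X ^ i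

@[simp] lemma tw_zero (e : Polynomial (Polynomial K)) (m : ℕ) : tw e m 0 = 0 := by
  simp [tw]

lemma ev2_tw (f : K →+* S) (a b : S) (e : Polynomial (Polynomial K)) (m : ℕ)
    (q : Polynomial (Polynomial K)) :
    ev2 f a b (tw e m q)
      = ∑ i ∈ q.support, Polynomial.eval₂ f a (q.coeff i) * a ^ (4 * i)
          * (ev2 f a b e) ^ (m - i) := by
  rw [tw, map_sum]
  refine Finset.sum_congr rfl fun i _ => ?_
  rw [map_mul, map_pow, ev2_CC, Polynomial.eval₂_mul, Polynomial.eval₂_pow,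
    Polynomial.eval₂_X]

lemma ev2_sub4 (f : K →+* S) (a b : S) (p : Polynomial (Polynomial K)) :
    ev2 f a b (sub4 p)
      = ∑ i ∈ p.support, Polynomial.eval₂ f a (p.coeff i) * a ^ (4 * i) * b ^ i := by
  rw [sub4, map_sum]
  refine Finset.sum_congr rfl fun i _ => ?_
  rw [map_mul, map_pow, ev2_CC, Polynomial.eval₂_mul, Polynomial.eval₂_pow,
    Polynomial.eval₂_X, ev2_X]

lemma tw_eval (z : Polynomial K) (e q : Polynomial (Polynomial K))
    (he : e.eval z = 0) (hq : q ≠ 0) :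
    (tw e q.natDegree q).eval z = q.leadingCoeff * Polynomial.X ^ (4 * q.natDegree) := by
  rw [tw, Polynomial.eval_finset_sum]
  rw [Finset.sum_eq_single q.natDegree]
  · rw [Nat.sub_self, pow_zero, mul_one, Polynomial.eval_C, Polynomial.leadingCoeff]
  · intro i hi hne
    have hile : i ≤ q.natDegree := Polynomial.le_natDegree_of_mem_supp i hi
    rw [Polynomial.eval_mul, Polynomial.eval_pow, he, zero_pow, mul_zero]
    omega
  · intro h
    exact absurd (Polynomial.natDegree_mem_support_of_nonzero hq) h

lemma sub4_coeff (p : Polynomial (Polynomial K)) (k : ℕ) :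
    (sub4 p).coeff k = p.coeff k * Polynomial.X ^ (4 * k) := by
  rw [sub4, Polynomial.finset_sum_coeff]
  rw [Finset.sum_eq_single k]
  · rw [Polynomial.coeff_C_mul, Polynomial.coeff_X_pow, if_pos rfl, mul_one]
  · intro i _ hne
    rw [Polynomial.coeff_C_mul, Polynomial.coeff_X_pow, if_neg (Ne.symm hne), mul_zero]
  · intro h
    simp [Polynomial.notMem_support_iff.mp h]

lemma sub4_eq_zero {p : Polynomial (Polynomial K)} (h : sub4 p = 0) : p = 0 := by
  ext k n
  have := congrArg (fun s => Polynomial.coeff s k) h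
  simp only [sub4_coeff, Polynomial.coeff_zero] at this
  have hX : (Polynomial.X : Polynomial K) ^ (4 * k) ≠ 0 := pow_ne_zero _ Polynomial.X_ne_zero
  have : p.coeff k = 0 := by
    rcases mul_eq_zero.mp this with h' | h'
    · exact h'
    · exact absurd h' hX
  simp [this]

variable {L : Type} [Field L]

lemma ev2_tw_eq (f : K →+* L) (a b y : L) (hy : y ≠ 0)
    (e : Polynomial (Polynomial K)) (hev : ev2 f a b e = y)
    (m : ℕ) (q : Polynomial (Polynomial K)) (hm : q.natDegree ≤ m) :
    ev2 f a b (tw e m q) = ev2 f a (a ^ 4 * y⁻¹) q * y ^ m := by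
  rw [ev2_tw, hev]
  conv_rhs => rw [ev2_as_sum]
  rw [Finset.sum_mul]
  refine Finset.sum_congr rfl fun i hi => ?_
  have hile : i ≤ m := le_trans (Polynomial.le_natDegree_of_mem_supp i hi) hm
  have hsplit : y ^ m = y ^ (m - i) * y ^ i := by
    rw [← pow_add, Nat.sub_add_cancel hile]
  rw [mul_pow, hsplit, pow_mul]
  have hyi : y ^ i * y⁻¹ ^ i = 1 := by rw [← mul_pow, mul_inv_cancel₀ hy, one_pow]
  linear_combination (-(Polynomial.eval₂ f a (q.coeff i)) * (a ^ 4) ^ i * y ^ (m - i)) * hyi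

lemma ev2_sub4_eq (f : K →+* L) (a b : L) (p : Polynomial (Polynomial K)) :
    ev2 f a b (sub4 p) = ev2 f a (a ^ 4 * b) p := by
  rw [ev2_sub4, ev2_as_sum]
  refine Finset.sum_congr rfl fun i _ => ?_
  rw [mul_pow, pow_mul, mul_assoc]

section PartC

variable {K : Type} [Field K]

def TT : MvPolynomial (Fin 4) K := MvPolynomial.X 0
def UU : MvPolynomial (Fin 4) K := MvPolynomial.X 1
def VV : MvPolynomial (Fin 4) K := MvPolynomial.X 2
def WW : MvPolynomial (Fin 4) K := MvPolynomial.X 3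

def IG : Ideal (MvPolynomial (Fin 4) K) :=
  Ideal.span {TT ^ 8 - UU * VV, TT ^ 4 * (VV - WW) - VV * WW, UU * (VV - WW) - TT ^ 4 * WW}

lemma g1_mem : (TT ^ 8 - UU * VV : MvPolynomial (Fin 4) K) ∈ IG :=
  Ideal.subset_span (by simp)

lemma g2_mem : (TT ^ 4 * (VV - WW) - VV * WW : MvPolynomial (Fin 4) K) ∈ IG :=
  Ideal.subset_span (by simp)

lemma g3_mem : (UU * (VV - WW) - TT ^ 4 * WW : MvPolynomial (Fin 4) K) ∈ IG :=
  Ideal.subset_span (by simp)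

lemma relUV (a : MvPolynomial (Fin 4) K) : a * UU * VV - a * TT ^ 8 ∈ IG := by
  have h : a * UU * VV - a * TT ^ 8 = (-a) * (TT ^ 8 - UU * VV) := by ring
  rw [h]; exact Ideal.mul_mem_left _ _ g1_mem

lemma relVW (a : MvPolynomial (Fin 4) K) :
    a * VV * WW - (a * TT ^ 4 * VV - a * TT ^ 4 * WW) ∈ IG := by
  have h : a * VV * WW - (a * TT ^ 4 * VV - a * TT ^ 4 * WW)
      = (-a) * (TT ^ 4 * (VV - WW) - VV * WW) := by ring
  rw [h]; exact Ideal.mul_mem_left _ _ g2_mem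

lemma relUW (a : MvPolynomial (Fin 4) K) :
    a * UU * WW - (a * TT ^ 8 - a * TT ^ 4 * WW) ∈ IG := by
  have h : a * UU * WW - (a * TT ^ 8 - a * TT ^ 4 * WW)
      = (-a) * ((TT ^ 8 - UU * VV) + (UU * (VV - WW) - TT ^ 4 * WW)) := by ring
  rw [h]; exact Ideal.mul_mem_left _ _ (Ideal.add_mem _ g1_mem g3_mem)

/-- evaluation into the 4-variable polynomial ring -/
def e2 (a b : MvPolynomial (Fin 4) K) : Polynomial (Polynomial K) →+* MvPolynomial (Fin 4) K :=
  ev2 (MvPolynomial.C) a b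

@[simp] lemma e2_X (a b : MvPolynomial (Fin 4) K) : e2 a b Polynomial.X = b := ev2_X _ a b

@[simp] lemma e2_CC (a b : MvPolynomial (Fin 4) K) (c : Polynomial K) :
    e2 a b (Polynomial.C c) = Polynomial.eval₂ MvPolynomial.C a c := ev2_CC _ a b c

lemma e2_mul_CXp (a b : MvPolynomial (Fin 4) K) (s : Polynomial (Polynomial K)) (k : ℕ) :
    e2 a b (s * Polynomial.C (Polynomial.X ^ k)) = e2 a b s * a ^ k :=
  ev2_mul_CXp (MvPolynomial.C) a b s k

lemma e2_mul_CX (a b : MvPolynomial (Fin 4) K) (s : Polynomial (Polynomial K)) :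
    e2 a b (s * Polynomial.C Polynomial.X) = e2 a b s * a := by
  have h := ev2_mul_CXp (MvPolynomial.C) a b s 1
  rw [pow_one, pow_one] at h
  exact h

/-- the normal-form combination -/
def cmb (p q r : Polynomial (Polynomial K)) : MvPolynomial (Fin 4) K :=
  e2 TT UU p + e2 TT VV q * VV + e2 TT WW r * WW

/-- decomposability predicate -/
def DD (f : MvPolynomial (Fin 4) K) : Prop :=
  ∃ p q r : Polynomial (Polynomial K), f - cmb p q r ∈ IG

lemma DD_congr {f g : MvPolynomial (Fin 4) K} (h : f = g) (hg : DD g) : DD f := h ▸ hg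

lemma DD_of_mem {f g : MvPolynomial (Fin 4) K} (h : f - g ∈ IG) (hg : DD g) : DD f := by
  obtain ⟨p, q, r, hm⟩ := hg
  refine ⟨p, q, r, ?_⟩
  have := Ideal.add_mem _ h hm
  rwa [show f - g + (g - cmb p q r) = f - cmb p q r by ring] at this

lemma DD_e2U (p : Polynomial (Polynomial K)) : DD (e2 TT UU p) :=
  ⟨p, 0, 0, by simp [cmb]⟩

lemma DD_e2V (q : Polynomial (Polynomial K)) : DD (e2 TT VV q * VV) :=
  ⟨0, q, 0, by simp [cmb]⟩

lemma DD_e2W (r : Polynomial (Polynomial K)) : DD (e2 TT WW r * WW) :=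
  ⟨0, 0, r, by simp [cmb]⟩

lemma DD_add {f g : MvPolynomial (Fin 4) K} (hf : DD f) (hg : DD g) : DD (f + g) := by
  obtain ⟨p, q, r, hm⟩ := hf
  obtain ⟨p', q', r', hm'⟩ := hg
  refine ⟨p + p', q + q', r + r', ?_⟩
  have := Ideal.add_mem _ hm hm'
  rwa [show f - cmb p q r + (g - cmb p' q' r')
      = f + g - (cmb p q r + cmb p' q' r') by ring,
    show cmb p q r + cmb p' q' r' = cmb (p + p') (q + q') (r + r') by
      simp only [cmb, map_add]; ring] at this

lemma DD_sub {f g : MvPolynomial (Fin 4) K} (hf : DD f) (hg : DD g) : DD (f - g) := by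
  obtain ⟨p', q', r', hm'⟩ := hg
  have hneg : DD (-g) := ⟨-p', -q', -r', by
    have := neg_mem hm'
    rwa [show -(g - cmb p' q' r') = -g - (-(cmb p' q' r')) by ring,
      show -cmb p' q' r' = cmb (-p') (-q') (-r') by simp only [cmb, map_neg]; ring] at this⟩
  exact DD_congr (sub_eq_add_neg f g) (DD_add hf hneg)

lemma DD_mulT {f : MvPolynomial (Fin 4) K} (hf : DD f) : DD (f * TT) := by
  obtain ⟨p, q, r, hm⟩ := hf
  refine ⟨p * Polynomial.C Polynomial.X, q * Polynomial.C Polynomial.X,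
    r * Polynomial.C Polynomial.X, ?_⟩
  have := Ideal.mul_mem_right TT _ hm
  rwa [show (f - cmb p q r) * TT = f * TT - cmb p q r * TT by ring,
    show cmb p q r * TT = cmb (p * Polynomial.C Polynomial.X) (q * Polynomial.C Polynomial.X)
        (r * Polynomial.C Polynomial.X) by simp only [cmb, e2_mul_CX]; ring] at this

lemma DD_mulTk {f : MvPolynomial (Fin 4) K} (hf : DD f) (k : ℕ) : DD (f * TT ^ k) := by
  induction k with
  | zero => simpa using hf
  | succ n ih => exact DD_congr (by ring) (DD_mulT ih)

lemma pureV (q : Polynomial (Polynomial K)) : DD (e2 TT VV q) := by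
  refine ⟨Polynomial.C (q.coeff 0), q.divX, 0, ?_⟩
  have h : e2 TT VV q = e2 TT UU (Polynomial.C (q.coeff 0)) + e2 TT VV q.divX * VV := by
    conv_lhs => rw [← q.divX_mul_X_add]
    rw [map_add, map_mul, e2_X, e2_CC, e2_CC]
    ring
  rw [cmb, h]
  simp

lemma pureW (r : Polynomial (Polynomial K)) : DD (e2 TT WW r) := by
  refine ⟨Polynomial.C (r.coeff 0), 0, r.divX, ?_⟩
  have h : e2 TT WW r = e2 TT UU (Polynomial.C (r.coeff 0)) + e2 TT WW r.divX * WW := by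
    conv_lhs => rw [← r.divX_mul_X_add]
    rw [map_add, map_mul, e2_X, e2_CC, e2_CC]
    ring
  rw [cmb, h]
  simp

/-- rewrite `C c * X^(n+1)` image -/
lemma e2_step (a b : MvPolynomial (Fin 4) K) (c : Polynomial K) (n : ℕ) :
    (e2 a b (Polynomial.C c * Polynomial.X ^ (n + 1)) : MvPolynomial (Fin 4) K)
      = e2 a b (Polynomial.C c * Polynomial.X ^ n) * b := by
  rw [show (Polynomial.C c * Polynomial.X ^ (n + 1) : Polynomial (Polynomial K))
      = Polynomial.C c * Polynomial.X ^ n * Polynomial.X by ring, map_mul, e2_X]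

/-- `e2 T U s * V` decomposes -/
lemma LVU (s : Polynomial (Polynomial K)) : DD (e2 TT UU s * VV) := by
  induction s using Polynomial.induction_on with
  | C c => exact DD_congr (by rw [e2_CC, e2_CC]) (DD_e2V (Polynomial.C c))
  | add p q hp hq => exact DD_congr (by rw [map_add, add_mul]) (DD_add hp hq)
  | monomial n c _ =>
      refine DD_congr (by rw [e2_step]) (DD_of_mem (relUV _) ?_)
      exact DD_congr (e2_mul_CXp TT UU _ 8).symm (DD_e2U _)

/-- `e2 T W s * V` decomposes -/
lemma LVW (s : Polynomial (Polynomial K)) : DD (e2 TT WW s * VV) := by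
  induction s using Polynomial.induction_on with
  | C c => exact DD_congr (by rw [e2_CC, e2_CC]) (DD_e2V (Polynomial.C c))
  | add p q hp hq => exact DD_congr (by rw [map_add, add_mul]) (DD_add hp hq)
  | monomial n c ih =>
      have he : (e2 TT WW (Polynomial.C c * Polynomial.X ^ (n + 1)) : MvPolynomial (Fin 4) K) * VV
          = e2 TT WW (Polynomial.C c * Polynomial.X ^ n) * VV * WW := by
        rw [e2_step]; ring
      refine DD_congr he (DD_of_mem (relVW _) (DD_sub ?_ ?_))
      · exact DD_congr (by ring) (DD_mulTk ih 4)
      · exact DD_congr (by rw [e2_mul_CXp]) (DD_e2W _)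

/-- `e2 T U s * W` decomposes -/
lemma LWU (s : Polynomial (Polynomial K)) : DD (e2 TT UU s * WW) := by
  induction s using Polynomial.induction_on with
  | C c => exact DD_congr (by rw [e2_CC, e2_CC]) (DD_e2W (Polynomial.C c))
  | add p q hp hq => exact DD_congr (by rw [map_add, add_mul]) (DD_add hp hq)
  | monomial n c ih =>
      have he : (e2 TT UU (Polynomial.C c * Polynomial.X ^ (n + 1)) : MvPolynomial (Fin 4) K) * WW
          = e2 TT UU (Polynomial.C c * Polynomial.X ^ n) * UU * WW := by
        rw [e2_step]
      refine DD_congr he (DD_of_mem (relUW _) (DD_sub ?_ ?_))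
      · exact DD_congr (e2_mul_CXp TT UU _ 8).symm (DD_e2U _)
      · exact DD_congr (by ring) (DD_mulTk ih 4)

/-- `e2 T V s * W` decomposes -/
lemma LWV (s : Polynomial (Polynomial K)) : DD (e2 TT VV s * WW) := by
  induction s using Polynomial.induction_on with
  | C c => exact DD_congr (by rw [e2_CC, e2_CC]) (DD_e2W (Polynomial.C c))
  | add p q hp hq => exact DD_congr (by rw [map_add, add_mul]) (DD_add hp hq)
  | monomial n c ih =>
      have he : (e2 TT VV (Polynomial.C c * Polynomial.X ^ (n + 1)) : MvPolynomial (Fin 4) K) * WW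
          = e2 TT VV (Polynomial.C c * Polynomial.X ^ n) * VV * WW := by
        rw [e2_step]
      refine DD_congr he (DD_of_mem (relVW _) (DD_sub ?_ ?_))
      · exact DD_congr (by rw [e2_mul_CXp]) (DD_e2V _)
      · exact DD_congr (by ring) (DD_mulTk ih 4)

lemma DD_of_mul {f g z : MvPolynomial (Fin 4) K} (hm : f - g ∈ IG) (h : DD (g * z)) :
    DD (f * z) :=
  DD_of_mem (by rw [← sub_mul]; exact Ideal.mul_mem_right z _ hm) h

lemma DD_mulU {f : MvPolynomial (Fin 4) K} (hf : DD f) : DD (f * UU) := by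
  obtain ⟨p, q, r, hm⟩ := hf
  refine DD_of_mul hm ?_
  rw [cmb, add_mul, add_mul]
  refine DD_add (DD_add ?_ ?_) ?_
  · exact DD_congr (by rw [map_mul, e2_X]) (DD_e2U (p * Polynomial.X))
  · refine DD_congr (show (e2 TT VV q : MvPolynomial (Fin 4) K) * VV * UU
        = e2 TT VV q * UU * VV by ring) (DD_of_mem (relUV _) ?_)
    exact DD_congr (by rw [e2_mul_CXp]) (pureV (q * Polynomial.C (Polynomial.X ^ 8)))
  · refine DD_congr (show (e2 TT WW r : MvPolynomial (Fin 4) K) * WW * UU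
        = e2 TT WW r * UU * WW by ring) (DD_of_mem (relUW _) (DD_sub ?_ ?_))
    · exact DD_congr (by rw [e2_mul_CXp]) (pureW (r * Polynomial.C (Polynomial.X ^ 8)))
    · exact DD_congr (by rw [e2_mul_CXp]) (DD_e2W (r * Polynomial.C (Polynomial.X ^ 4)))

lemma DD_mulV {f : MvPolynomial (Fin 4) K} (hf : DD f) : DD (f * VV) := by
  obtain ⟨p, q, r, hm⟩ := hf
  refine DD_of_mul hm ?_
  rw [cmb, add_mul, add_mul]
  refine DD_add (DD_add (LVU p) ?_) ?_
  · exact DD_congr (by rw [map_mul, e2_X]) (DD_e2V (q * Polynomial.X))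
  · exact DD_congr (by rw [map_mul, e2_X]) (LVW (r * Polynomial.X))

lemma DD_mulW {f : MvPolynomial (Fin 4) K} (hf : DD f) : DD (f * WW) := by
  obtain ⟨p, q, r, hm⟩ := hf
  refine DD_of_mul hm ?_
  rw [cmb, add_mul, add_mul]
  refine DD_add (DD_add (LWU p) ?_) ?_
  · refine DD_congr (show (e2 TT VV q : MvPolynomial (Fin 4) K) * VV * WW
        = e2 TT VV q * VV * WW from rfl) (DD_of_mem (relVW _) (DD_sub ?_ ?_))
    · exact DD_congr (by rw [e2_mul_CXp]) (DD_e2V (q * Polynomial.C (Polynomial.X ^ 4)))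
    · exact DD_congr (by ring) (DD_mulTk (LWV q) 4)
  · exact DD_congr (by rw [map_mul, e2_X]) (DD_e2W (r * Polynomial.X))

lemma DD_top (f : MvPolynomial (Fin 4) K) : DD f := by
  induction f using MvPolynomial.induction_on with
  | C a =>
      exact DD_congr (show MvPolynomial.C a
        = e2 TT UU (Polynomial.C (Polynomial.C a)) by rw [e2_CC, Polynomial.eval₂_C])
        (DD_e2U _)
  | add p q hp hq => exact DD_add hp hq
  | mul_X f i ih =>
      fin_cases i
      · exact DD_mulT ih
      · exact DD_mulU ih
      · exact DD_mulV ih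
      · exact DD_mulW ih

end PartC



section Final

set_option maxHeartbeats 1000000
set_option synthInstance.maxHeartbeats 400000

variable {K : Type} [Field K]

/-- The crucial linear-independence lemma: a vanishing normal form is zero. -/
lemma key_zero (t x : FractionRing (MvPolynomial (Fin 2) K))
    (ht : t = algebraMap (MvPolynomial (Fin 2) K) _ (MvPolynomial.X 0))
    (hx : x = algebraMap (MvPolynomial (Fin 2) K) _ (MvPolynomial.X 1))
    (p q r : Polynomial (Polynomial K))
    (h0 : ev2 (algebraMap K _) t (t ^ 4 * x) p
        + ev2 (algebraMap K _) t (t ^ 4 * x⁻¹) q * (t ^ 4 * x⁻¹)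
        + ev2 (algebraMap K _) t (t ^ 4 * (x + 1)⁻¹) r * (t ^ 4 * (x + 1)⁻¹) = 0) :
    p = 0 ∧ q = 0 ∧ r = 0 := by
  have hx0 : x ≠ 0 := by
    rw [hx]
    intro h
    have h' : algebraMap (MvPolynomial (Fin 2) K) (FractionRing (MvPolynomial (Fin 2) K))
        (MvPolynomial.X 1) = algebraMap (MvPolynomial (Fin 2) K)
          (FractionRing (MvPolynomial (Fin 2) K)) 0 := by rw [map_zero]; exact h
    exact MvPolynomial.X_ne_zero 1
      (IsFractionRing.injective (MvPolynomial (Fin 2) K)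
        (FractionRing (MvPolynomial (Fin 2) K)) h')
  have hx1 : x + 1 ≠ 0 := by
    rw [hx]
    intro h
    rw [← map_one (algebraMap (MvPolynomial (Fin 2) K)
      (FractionRing (MvPolynomial (Fin 2) K))), ← map_add (algebraMap (MvPolynomial (Fin 2) K)
      (FractionRing (MvPolynomial (Fin 2) K)))] at h
    have h' : algebraMap (MvPolynomial (Fin 2) K) (FractionRing (MvPolynomial (Fin 2) K))
        (MvPolynomial.X 1 + 1) = algebraMap (MvPolynomial (Fin 2) K)
          (FractionRing (MvPolynomial (Fin 2) K)) 0 := by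
      rw [map_zero]; exact h
    have h2 : (MvPolynomial.X 1 + 1 : MvPolynomial (Fin 2) K) = 0 :=
      IsFractionRing.injective (MvPolynomial (Fin 2) K)
        (FractionRing (MvPolynomial (Fin 2) K)) h'
    have := congrArg MvPolynomial.constantCoeff h2
    simp at this
  rw [← ev2_mul_X, ← ev2_mul_X] at h0
  set q1 := q * Polynomial.X with hq1def
  set r1 := r * Polynomial.X with hr1def
  set m := q1.natDegree with hmdef
  set n := r1.natDegree with hndef
  set E : Polynomial (Polynomial K) := Polynomial.X + 1 with hE
  set Φ := sub4 p * Polynomial.X ^ m * E ^ n + tw Polynomial.X m q1 * E ^ n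
    + tw E n r1 * Polynomial.X ^ m with hΦ
  have hEvX : ev2 (algebraMap K _) t x (Polynomial.X : Polynomial (Polynomial K)) = x :=
    ev2_X _ _ _
  have hEvE : ev2 (algebraMap K _) t x E = x + 1 := by
    rw [hE, map_add, map_one, ev2_X]
  have h1 : ev2 (algebraMap K _) t x Φ = 0 := by
    rw [hΦ, map_add, map_add, map_mul, map_mul, map_mul, map_mul, map_pow, map_pow,
      hEvX, hEvE, ev2_sub4_eq,
      ev2_tw_eq (algebraMap K _) t x x hx0 Polynomial.X hEvX m q1 le_rfl,
      ev2_tw_eq (algebraMap K _) t x (x + 1) hx1 E hEvE n r1 le_rfl]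
    linear_combination (x ^ m * (x + 1) ^ n) * h0
  have hΦ0 : Φ = 0 := by
    apply Ev_injective
    rw [map_zero, ← ht, ← hx]
    exact h1
  have hq : q = 0 := by
    by_contra hne
    have hq1 : q1 ≠ 0 := mul_ne_zero hne Polynomial.X_ne_zero
    have hm1 : m ≠ 0 := by
      rw [hmdef, hq1def, Polynomial.natDegree_mul_X hne]; omega
    have heval := congrArg (Polynomial.eval (0 : Polynomial K)) hΦ0
    rw [hΦ] at heval
    have e1 : (Polynomial.X : Polynomial (Polynomial K)).eval 0 = 0 := Polynomial.eval_X
    have e2 : E.eval (0 : Polynomial K) = 1 := by simp [hE]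
    have e3 := tw_eval (0 : Polynomial K) Polynomial.X q1 e1 hq1
    rw [← hmdef] at e3
    simp only [Polynomial.eval_add, Polynomial.eval_mul, Polynomial.eval_pow, e1, e2, e3,
      one_pow, zero_pow hm1, mul_zero, zero_mul, add_zero, zero_add, mul_one,
      Polynomial.eval_zero] at heval
    rcases mul_eq_zero.mp heval with h' | h'
    · exact hq1 (Polynomial.leadingCoeff_eq_zero.mp h')
    · exact pow_ne_zero _ Polynomial.X_ne_zero h'
  have hr : r = 0 := by
    by_contra hne
    have hr1 : r1 ≠ 0 := mul_ne_zero hne Polynomial.X_ne_zero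
    have hn1 : n ≠ 0 := by
      rw [hndef, hr1def, Polynomial.natDegree_mul_X hne]; omega
    have heval := congrArg (Polynomial.eval (-1 : Polynomial K)) hΦ0
    rw [hΦ] at heval
    have e1 : (Polynomial.X : Polynomial (Polynomial K)).eval (-1 : Polynomial K) = -1 :=
      Polynomial.eval_X
    have e2 : E.eval (-1 : Polynomial K) = 0 := by simp [hE]
    have e3 := tw_eval (-1 : Polynomial K) E r1 e2 hr1
    rw [← hndef] at e3
    simp only [Polynomial.eval_add, Polynomial.eval_mul, Polynomial.eval_pow, e1, e2, e3,
      zero_pow hn1, mul_zero, zero_mul, add_zero, zero_add, Polynomial.eval_zero] at heval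
    rcases mul_eq_zero.mp heval with h' | h'
    · rcases mul_eq_zero.mp h' with h'' | h''
      · exact hr1 (Polynomial.leadingCoeff_eq_zero.mp h'')
      · exact pow_ne_zero _ Polynomial.X_ne_zero h''
    · exact pow_ne_zero _ (neg_ne_zero.mpr one_ne_zero) h'
  have hp : p = 0 := by
    have hq1z : q1 = 0 := by rw [hq1def, hq, zero_mul]
    have hr1z : r1 = 0 := by rw [hr1def, hr, zero_mul]
    rw [hΦ, hq1z, hr1z, tw_zero, tw_zero, zero_mul, zero_mul, add_zero, add_zero] at hΦ0
    have hEne : (E : Polynomial (Polynomial K)) ≠ 0 := by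
      rw [hE, show ((1 : Polynomial (Polynomial K))) = Polynomial.C 1 from Polynomial.C_1.symm]
      exact (Polynomial.monic_X_add_C _).ne_zero
    rcases mul_eq_zero.mp hΦ0 with h' | h'
    · rcases mul_eq_zero.mp h' with h'' | h''
      · exact sub4_eq_zero h''
      · exact absurd h'' (pow_ne_zero _ Polynomial.X_ne_zero)
    · exact absurd h' (pow_ne_zero _ hEne)
  exact ⟨hp, hq, hr⟩

lemma x_ne_zero' (x : FractionRing (MvPolynomial (Fin 2) K))
    (hx : x = algebraMap (MvPolynomial (Fin 2) K) _ (MvPolynomial.X 1)) : x ≠ 0 := by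
  rw [hx]
  intro h
  have h' : algebraMap (MvPolynomial (Fin 2) K) (FractionRing (MvPolynomial (Fin 2) K))
      (MvPolynomial.X 1) = algebraMap (MvPolynomial (Fin 2) K)
        (FractionRing (MvPolynomial (Fin 2) K)) 0 := by rw [map_zero]; exact h
  exact MvPolynomial.X_ne_zero 1
    (IsFractionRing.injective (MvPolynomial (Fin 2) K)
      (FractionRing (MvPolynomial (Fin 2) K)) h')

lemma x1_ne_zero' (x : FractionRing (MvPolynomial (Fin 2) K))
    (hx : x = algebraMap (MvPolynomial (Fin 2) K) _ (MvPolynomial.X 1)) : x + 1 ≠ 0 := by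
  rw [hx]
  intro h
  rw [← map_one (algebraMap (MvPolynomial (Fin 2) K)
    (FractionRing (MvPolynomial (Fin 2) K))), ← map_add (algebraMap (MvPolynomial (Fin 2) K)
    (FractionRing (MvPolynomial (Fin 2) K)))] at h
  have h' : algebraMap (MvPolynomial (Fin 2) K) (FractionRing (MvPolynomial (Fin 2) K))
      (MvPolynomial.X 1 + 1) = algebraMap (MvPolynomial (Fin 2) K)
        (FractionRing (MvPolynomial (Fin 2) K)) 0 := by
    rw [map_zero]; exact h
  have h2 : (MvPolynomial.X 1 + 1 : MvPolynomial (Fin 2) K) = 0 :=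
    IsFractionRing.injective (MvPolynomial (Fin 2) K)
      (FractionRing (MvPolynomial (Fin 2) K)) h'
  have := congrArg MvPolynomial.constantCoeff h2
  simp at this

lemma ker_eq (t x : FractionRing (MvPolynomial (Fin 2) K))
    (ht : t = algebraMap (MvPolynomial (Fin 2) K) _ (MvPolynomial.X 0))
    (hx : x = algebraMap (MvPolynomial (Fin 2) K) _ (MvPolynomial.X 1))
    (φ : MvPolynomial (Fin 4) K →ₐ[K] FractionRing (MvPolynomial (Fin 2) K))
    (hφ : φ = MvPolynomial.aeval ![t, t ^ 4 * x, t ^ 4 * x⁻¹, t ^ 4 * (x + 1)⁻¹]) :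
    RingHom.ker φ = IG := by
  have hx0 : x ≠ 0 := x_ne_zero' x hx
  have hx1 : x + 1 ≠ 0 := x1_ne_zero' x hx
  have hvT : φ TT = t := by rw [hφ]; simp [TT]
  have hvU : φ UU = t ^ 4 * x := by rw [hφ]; simp [UU]
  have hvV : φ VV = t ^ 4 * x⁻¹ := by rw [hφ]; simp [VV]
  have hvW : φ WW = t ^ 4 * (x + 1)⁻¹ := by rw [hφ]; simp [WW]
  have hle : IG ≤ RingHom.ker (φ : MvPolynomial (Fin 4) K →+* FractionRing (MvPolynomial (Fin 2) K)) := by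
    rw [IG, Ideal.span_le]
    rintro g hg
    simp only [Set.mem_insert_iff, Set.mem_singleton_iff] at hg
    rcases hg with rfl | rfl | rfl <;>
      refine SetLike.mem_coe.mpr (RingHom.mem_ker.mpr ?_)
    · simp only [RingHom.coe_coe, map_sub, map_pow, map_mul, hvT, hvU, hvV]
      field_simp
      ring
    · simp only [RingHom.coe_coe, map_sub, map_mul, map_pow, hvT, hvV, hvW]
      field_simp
      ring
    · simp only [RingHom.coe_coe, map_sub, map_mul, map_pow, hvT, hvU, hvV, hvW]
      field_simp
      ring
  refine le_antisymm ?_ hle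
  intro f hf
  obtain ⟨p, q, r, hm⟩ := DD_top f
  have hc : φ (cmb p q r) = 0 := by
    have h1 : φ (f - cmb p q r) = 0 := RingHom.mem_ker.mp (hle hm)
    have h2 : φ f = 0 := RingHom.mem_ker.mp hf
    rw [map_sub, h2, zero_sub, neg_eq_zero] at h1
    exact h1
  have hφe2 : ∀ (a b : MvPolynomial (Fin 4) K) (s : Polynomial (Polynomial K)),
      φ (e2 a b s) = ev2 (algebraMap K (FractionRing (MvPolynomial (Fin 2) K))) (φ a) (φ b) s := by
    intro a b s
    have h := hom_ev2 (φ : MvPolynomial (Fin 4) K →+* FractionRing (MvPolynomial (Fin 2) K))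
      (MvPolynomial.C) a b s
    rw [show ((φ : MvPolynomial (Fin 4) K →+* FractionRing (MvPolynomial (Fin 2) K)).comp
        MvPolynomial.C) = algebraMap K (FractionRing (MvPolynomial (Fin 2) K)) from
      RingHom.ext fun k => by simp] at h
    exact h
  rw [cmb, map_add, map_add, map_mul, map_mul, hφe2, hφe2, hφe2, hvT, hvU, hvV, hvW] at hc
  obtain ⟨hp, hq, hr⟩ := key_zero t x ht hx p q r hc
  rw [hp, hq, hr] at hm
  simpa [cmb] using hm

end Final

end

end Pres15

/-- Let `R = K[T,U,V,W]/(T⁸-UV, T⁴(V-W)-VW, U(V-W)-T⁴W)` over a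
field `K`.  Then `R` is isomorphic to the subring `K[t, t⁴x, t⁴x⁻¹, t⁴(x+1)⁻¹]`
of `K(t,x)` via `t ↦ t, u ↦ t⁴x, v ↦ t⁴x⁻¹, w ↦ t⁴(x+1)⁻¹`: the kernel of the
substitution map `K[T,U,V,W] → K(t,x)` is exactly the ideal of relations, and
its range is exactly the subalgebra `K[t, t⁴x, t⁴x⁻¹, t⁴(x+1)⁻¹]`. -/
theorem presentation_of_subring (K : Type) [Field K]
    (t x : FractionRing (MvPolynomial (Fin 2) K))
    (ht : t = algebraMap (MvPolynomial (Fin 2) K) _ (X 0))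
    (hx : x = algebraMap (MvPolynomial (Fin 2) K) _ (X 1))
    (T U V W : MvPolynomial (Fin 4) K)
    (hT : T = X 0) (hU : U = X 1) (hV : V = X 2) (hW : W = X 3)
    (φ : MvPolynomial (Fin 4) K →ₐ[K] FractionRing (MvPolynomial (Fin 2) K))
    (hφ : φ = aeval ![t, t ^ 4 * x, t ^ 4 * x⁻¹, t ^ 4 * (x + 1)⁻¹]) :
    RingHom.ker φ =
      Ideal.span {T ^ 8 - U * V, T ^ 4 * (V - W) - V * W,
        U * (V - W) - T ^ 4 * W} ∧
    φ.range =
      Algebra.adjoin K {t, t ^ 4 * x, t ^ 4 * x⁻¹, t ^ 4 * (x + 1)⁻¹} := by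
  subst hT hU hV hW
  constructor
  · exact Pres15.ker_eq t x ht hx φ hφ
  · rw [hφ, ← Algebra.adjoin_range_eq_range_aeval]
    congr 1
    ext y
    constructor
    · rintro ⟨i, rfl⟩
      fin_cases i <;> simp
    · rintro (rfl | rfl | rfl | rfl)
      exacts [⟨0, rfl⟩, ⟨1, rfl⟩, ⟨2, rfl⟩, ⟨3, rfl⟩]
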